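/- In the equational theory of the RMC, for distinct locations a ≠ b, the permutation equations [s]a;[t]b = [t]b;[s]a and a<s>;b<t> = b<t>;a<s> are derivable (from the axiom [s]a;b<t> = b<t>;[s]a together with the η, ν and β axioms). -/
import Mathlib


namespace RMC


/-- Algebraic terms (values) over a single-sorted first-order signature:
`F` is the set of function symbols, `ar` gives arities. Variables are natural numbers. -/
inductive Val (F : Type) (ar : F → ℕ) : Type
  | var : ℕ → Val F ar
  | app : (f : F) → (Fin (ar f) → Val F ar) → Val F ar

variable {F : Type} {ar : F → ℕ}

/-- Substitutions, as total maps from variables to values. -/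
abbrev Subst (F : Type) (ar : F → ℕ) := ℕ → Val F ar

/-- Applying a substitution to a value. -/
def Val.subst (σ : Subst F ar) : Val F ar → Val F ar
  | .var x => σ x
  | .app f v => .app f fun i => (v i).subst σ

/-- The identity (empty) substitution. -/
def idS : Subst F ar := Val.var

/-- The single substitution {t/x}. -/
def Subst.single (x : ℕ) (t : Val F ar) : Subst F ar :=
  Function.update Val.var x t

/-- Composition of substitutions: `comp τ σ` is τσ (first σ, then τ). -/
def Subst.comp (τ σ : Subst F ar) : Subst F ar := fun x => (σ x).subst τ

/-- Free variables of a value. -/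
def Val.fv : Val F ar → Set ℕ
  | .var x => {x}
  | .app _ v => ⋃ i, (v i).fv

/-- Computation terms of the Relational Machine Calculus, with locations
indexed by natural numbers: skip `*`, failure `0`, sequencing `M;N`,
Kleene star `M*`, sum `M+N`, push `[t]a`, pop `a<t>`, and new-variable `Ex.M`. -/
inductive Tm (F : Type) (ar : F → ℕ) : Type
  | skip
  | fail
  | seq (M N : Tm F ar)
  | star (M : Tm F ar)
  | sum (M N : Tm F ar)
  | push (t : Val F ar) (a : ℕ)
  | pop (a : ℕ) (t : Val F ar)
  | nu (x : ℕ) (M : Tm F ar)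

/-- Applying a substitution to a term (naive, global variables). -/
def Tm.subst (σ : Subst F ar) : Tm F ar → Tm F ar
  | .skip => .skip
  | .fail => .fail
  | .seq M N => .seq (M.subst σ) (N.subst σ)
  | .star M => .star (M.subst σ)
  | .sum M N => .sum (M.subst σ) (N.subst σ)
  | .push t a => .push (t.subst σ) a
  | .pop a t => .pop a (t.subst σ)
  | .nu x M => .nu x (M.subst σ)

/-- Free variables of a term; `Ex.M` binds x. -/
def Tm.fv : Tm F ar → Set ℕ
  | .skip => ∅
  | .fail => ∅
  | .seq M N => M.fv ∪ N.fv
  | .star M => M.fv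
  | .sum M N => M.fv ∪ N.fv
  | .push t _ => t.fv
  | .pop _ t => t.fv
  | .nu x M => M.fv \ {x}

/-- Duality: the syntactic involution exchanging push and pop and reversing
sequential composition. -/
def Tm.dagger : Tm F ar → Tm F ar
  | .skip => .skip
  | .fail => .fail
  | .seq M N => .seq N.dagger M.dagger
  | .star M => .star M.dagger
  | .sum M N => .sum M.dagger N.dagger
  | .push t a => .pop a t
  | .pop a t => .push t a
  | .nu x M => .nu x M.dagger

/-- n-fold sequential composition Mⁿ. -/
def Tm.pow (M : Tm F ar) : ℕ → Tm F ar
  | 0 => .skip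
  | n+1 => .seq M (M.pow n)

/-- `[t₁]a; … ;[tₙ]a; M` -/
def pushSeqThen (a : ℕ) (ts : List (Val F ar)) (M : Tm F ar) : Tm F ar :=
  ts.foldr (fun t K => .seq (.push t a) K) M

/-- `a<tₙ>; … ;a<t₁>; M` (note the inversion). -/
def popSeqThen (a : ℕ) (ts : List (Val F ar)) (M : Tm F ar) : Tm F ar :=
  ts.foldl (fun K t => .seq (.pop a t) K) M

/-- `[t₁]a; … ;[tₙ]a` -/
def pushSeq (a : ℕ) (ts : List (Val F ar)) : Tm F ar := pushSeqThen a ts .skip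

/-- `a<tₙ>; … ;a<t₁>` -/
def popSeq (a : ℕ) (ts : List (Val F ar)) : Tm F ar := popSeqThen a ts .skip

/-- `Ex₁…Exₙ.M` -/
def nuList (xs : List ℕ) (M : Tm F ar) : Tm F ar := xs.foldr .nu M

/-- A memory: a family of stacks (lists of values, head of the list = head of
the stack) indexed by locations. -/
abbrev Mem (F : Type) (ar : F → ℕ) := ℕ → List (Val F ar)

/-- Applying a substitution to a memory. -/
def Mem.subst (σ : Subst F ar) (S : Mem F ar) : Mem F ar := fun a => (S a).map (Val.subst σ)

/-- Free variables of a memory. -/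
def Mem.fv (S : Mem F ar) : Set ℕ := ⋃ a, ⋃ t ∈ S a, Val.fv t

/-- The empty memory. -/
def emptyMem : Mem F ar := fun _ => []


/-- The equational theory of the RMC: the least congruence generated by the
axioms of Kleene algebra, the new-variable axioms, the β-, η- and
unification-axioms, and the permutation axiom.  (The inequation `M ≤ N` is
encoded as `M + N = N`.) -/
inductive TmEq : Tm F ar → Tm F ar → Prop
  -- congruence
  | refl (M : Tm F ar) : TmEq M M
  | symm {M N : Tm F ar} : TmEq M N → TmEq N M
  | trans {M N P : Tm F ar} : TmEq M N → TmEq N P → TmEq M P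
  | seq_congr {M M' N N' : Tm F ar} : TmEq M M' → TmEq N N' → TmEq (.seq M N) (.seq M' N')
  | sum_congr {M M' N N' : Tm F ar} : TmEq M M' → TmEq N N' → TmEq (.sum M N) (.sum M' N')
  | star_congr {M M' : Tm F ar} : TmEq M M' → TmEq (.star M) (.star M')
  | nu_congr {M M' : Tm F ar} (x : ℕ) : TmEq M M' → TmEq (.nu x M) (.nu x M')
  -- Kleene algebra: idempotent semiring
  | seq_assoc (M N P : Tm F ar) : TmEq (.seq (.seq M N) P) (.seq M (.seq N P))
  | seq_skip_l (M : Tm F ar) : TmEq (.seq .skip M) M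
  | seq_skip_r (M : Tm F ar) : TmEq (.seq M .skip) M
  | sum_assoc (M N P : Tm F ar) : TmEq (.sum (.sum M N) P) (.sum M (.sum N P))
  | sum_comm (M N : Tm F ar) : TmEq (.sum M N) (.sum N M)
  | sum_idem (M : Tm F ar) : TmEq (.sum M M) M
  | sum_zero (M : Tm F ar) : TmEq (.sum M .fail) M
  | dist_l (M N P : Tm F ar) : TmEq (.seq P (.sum M N)) (.sum (.seq P M) (.seq P N))
  | dist_r (M N P : Tm F ar) : TmEq (.seq (.sum M N) P) (.sum (.seq M P) (.seq N P))
  | zero_seq (M : Tm F ar) : TmEq (.seq .fail M) .fail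
  | seq_zero (M : Tm F ar) : TmEq (.seq M .fail) .fail
  -- Kleene algebra: star
  | star_unfold_l (M : Tm F ar) : TmEq (.star M) (.sum .skip (.seq M (.star M)))
  | star_unfold_r (M : Tm F ar) : TmEq (.star M) (.sum .skip (.seq (.star M) M))
  | star_ind_l {M N : Tm F ar} :
      TmEq (.sum (.seq M N) N) N → TmEq (.sum (.seq (.star M) N) N) N
  | star_ind_r {M N : Tm F ar} :
      TmEq (.sum (.seq M N) M) M → TmEq (.sum (.seq M (.star N)) M) M
  -- new variable
  | nu_elim {x : ℕ} {M : Tm F ar} : x ∉ Tm.fv M → TmEq (.nu x M) M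
  | nu_seq_l {x : ℕ} {M N : Tm F ar} : x ∉ Tm.fv M →
      TmEq (.seq M (.nu x N)) (.nu x (.seq M N))
  | nu_seq_r {x : ℕ} {M N : Tm F ar} : x ∉ Tm.fv N →
      TmEq (.seq (.nu x M) N) (.nu x (.seq M N))
  | nu_sum (x : ℕ) (M N : Tm F ar) : TmEq (.nu x (.sum M N)) (.sum (.nu x M) (.nu x N))
  | nu_swap (x y : ℕ) (M : Tm F ar) : TmEq (.nu x (.nu y M)) (.nu y (.nu x M))
  -- β and unification
  | beta_l {x : ℕ} {t : Val F ar} (a : ℕ) (N M : Tm F ar) : x ∉ Val.fv t →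
      TmEq (.nu x (.seq N (.seq (.push t a) (.seq (.pop a (.var x)) M))))
        (Tm.subst (Subst.single x t) (.seq N M))
  | beta_r {x : ℕ} {t : Val F ar} (a : ℕ) (N M : Tm F ar) : x ∉ Val.fv t →
      TmEq (.nu x (.seq N (.seq (.push (.var x) a) (.seq (.pop a t) M))))
        (Tm.subst (Subst.single x t) (.seq N M))
  | eta (x a : ℕ) :
      TmEq (.sum (.nu x (.seq (.pop a (.var x)) (.push (.var x) a))) .skip) .skip
  | ups_var (x a : ℕ) : TmEq (.seq (.push (.var x) a) (.pop a (.var x))) .skip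
  | ups_app (a : ℕ) (f : F) (v w : Fin (ar f) → Val F ar) :
      TmEq (.seq (.push (.app f v) a) (.pop a (.app f w)))
        (.seq (pushSeq a (List.ofFn v)) (popSeq a (List.ofFn w)))
  | ups_clash (a : ℕ) {f g : F} (v : Fin (ar f) → Val F ar) (w : Fin (ar g) → Val F ar) :
      f ≠ g → TmEq (.seq (.push (.app f v) a) (.pop a (.app g w))) .fail
  | occ_l (a : ℕ) {x : ℕ} {f : F} {v : Fin (ar f) → Val F ar} :
      x ∈ Val.fv (.app f v) →
      TmEq (.seq (.push (.app f v) a) (.pop a (.var x))) .fail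
  | occ_r (a : ℕ) {x : ℕ} {f : F} {v : Fin (ar f) → Val F ar} :
      x ∈ Val.fv (.app f v) →
      TmEq (.seq (.push (.var x) a) (.pop a (.app f v))) .fail
  -- permutation
  | perm {a b : ℕ} (s t : Val F ar) : a ≠ b →
      TmEq (.seq (.push s a) (.pop b t)) (.seq (.pop b t) (.push s a))

/-! ### Auxiliary lemmas -/

lemma Val.fv_finite (t : Val F ar) : t.fv.Finite := by
  induction t with
  | var x => exact Set.finite_singleton x
  | app f v ih => exact Set.finite_iUnion ih

lemma exists_fresh (s t : Val F ar) : ∃ x, x ∉ s.fv ∧ x ∉ t.fv := by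
  obtain ⟨x, hx⟩ := (s.fv_finite.union t.fv_finite).infinite_compl.nonempty
  exact ⟨x, fun h => hx (Or.inl h), fun h => hx (Or.inr h)⟩

lemma Val.subst_single_of_notMem {x : ℕ} {t : Val F ar} (s : Val F ar)
    (h : x ∉ s.fv) : s.subst (Subst.single x t) = s := by
  induction s with
  | var y =>
      have hxy : y ≠ x := by
        simp [Val.fv] at h; exact fun e => h (e ▸ rfl)
      simp [Val.subst, Subst.single, Function.update_of_ne hxy]
  | app f v ih =>
      simp only [Val.fv, Set.mem_iUnion, not_exists] at h
      simp only [Val.subst]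
      congr 1
      funext i
      exact ih i (h i)

lemma Subst.single_same (x : ℕ) (t : Val F ar) : Subst.single x t x = t := by
  simp [Subst.single]

/-- `M ≤ N` in the equational theory. -/
def Le (M N : Tm F ar) : Prop := TmEq (.sum M N) N

lemma Le.antisymm {M N : Tm F ar} (h1 : Le M N) (h2 : Le N M) : TmEq M N :=
  (h2.symm.trans (TmEq.sum_comm N M)).trans h1

lemma Le.congr {M M' N N' : Tm F ar} (hM : TmEq M M') (hN : TmEq N N')
    (h : Le M N) : Le M' N' :=
  ((TmEq.sum_congr hM.symm hN.symm).trans h).trans hN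

lemma Le.seq_l {M N : Tm F ar} (K : Tm F ar) (h : Le M N) :
    Le (.seq K M) (.seq K N) :=
  (TmEq.dist_l M N K).symm.trans (TmEq.seq_congr (TmEq.refl K) h)

lemma Le.seq_r {M N : Tm F ar} (K : Tm F ar) (h : Le M N) :
    Le (.seq M K) (.seq N K) :=
  (TmEq.dist_r M N K).symm.trans (TmEq.seq_congr h (TmEq.refl K))

/-- The push half: `[s]a;[t]b ≤ [t]b;[s]a`. -/
lemma push_le {a b : ℕ} (hab : a ≠ b) (s t : Val F ar) :
    Le (Tm.seq (.push s a) (.push t b)) (.seq (.push t b) (.push s a)) := by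
  obtain ⟨x, hxs, hxt⟩ := exists_fresh s t
  -- notation
  set P : Tm F ar := .push s a with hP
  set Q : Tm F ar := .push t b with hQ
  set D : Tm F ar := .pop b (.var x) with hD
  set E : Tm F ar := .push (.var x) b with hE
  set K : Tm F ar := .nu x (.seq D E) with hK
  -- β-step
  have h1 : TmEq (Tm.nu x (.seq .skip (.seq Q (.seq D (.seq P E)))))
      (Tm.seq .skip (.seq P Q)) := by
    have := TmEq.beta_l (x := x) (t := t) b .skip
      (Tm.seq (.push s a) (.push (.var x) b)) hxt
    rwa [show Tm.subst (Subst.single x t)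
        (Tm.seq .skip (.seq (.push s a) (.push (.var x) b)))
        = Tm.seq .skip (.seq (.push s a) (.push t b)) from by
      simp [Tm.subst, Val.subst, Subst.single_same,
        Val.subst_single_of_notMem s hxs]] at this
  -- rearrange inside the ν using perm
  have hswap : TmEq (Tm.seq D (.seq P E)) (.seq P (.seq D E)) :=
    ((TmEq.seq_assoc D P E).symm.trans
      (TmEq.seq_congr (TmEq.perm s (.var x) hab).symm (TmEq.refl E))).trans
      (TmEq.seq_assoc P D E)
  have h2 : TmEq (Tm.seq .skip (.seq Q (.seq D (.seq P E))))
      (Tm.seq Q (.seq P (.seq D E))) :=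
    (TmEq.seq_skip_l _).trans (TmEq.seq_congr (TmEq.refl Q) hswap)
  -- extrude the ν
  have hxQ : x ∉ Tm.fv Q := by simpa [hQ, Tm.fv] using hxt
  have hxP : x ∉ Tm.fv P := by simpa [hP, Tm.fv] using hxs
  have h4 : TmEq (Tm.nu x (.seq Q (.seq P (.seq D E)))) (Tm.seq Q (.seq P K)) :=
    (TmEq.nu_seq_l hxQ).symm.trans
      (TmEq.seq_congr (TmEq.refl Q) (TmEq.nu_seq_l hxP).symm)
  have hPQ : TmEq (Tm.seq P Q) (Tm.seq Q (.seq P K)) :=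
    (TmEq.seq_skip_l (Tm.seq P Q)).symm.trans
      (h1.symm.trans ((TmEq.nu_congr x h2).trans h4))
  -- η-step
  have hKle : Le K Tm.skip := TmEq.eta x b
  have hle : Le (Tm.seq Q (.seq P K)) (Tm.seq Q (.seq P .skip)) :=
    (hKle.seq_l P).seq_l Q
  exact hle.congr hPQ.symm
    (TmEq.seq_congr (TmEq.refl Q) (TmEq.seq_skip_r P))

/-- The pop half: `b⟨t⟩;a⟨s⟩ ≤ a⟨s⟩;b⟨t⟩`. -/
lemma pop_le {a b : ℕ} (hab : a ≠ b) (s t : Val F ar) :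
    Le (Tm.seq (.pop b t) (.pop a s)) (.seq (.pop a s) (.pop b t)) := by
  obtain ⟨x, hxs, hxt⟩ := exists_fresh s t
  set P : Tm F ar := .pop a s with hP
  set Q : Tm F ar := .pop b t with hQ
  set D : Tm F ar := .pop b (.var x) with hD
  set E : Tm F ar := .push (.var x) b with hE
  set K : Tm F ar := .nu x (.seq D E) with hK
  -- β-step (note: `x` occurs in `N = D;P`)
  have h1 : TmEq (Tm.nu x (.seq (.seq D P) (.seq E (.seq Q .skip))))
      (Tm.seq (.seq Q P) .skip) := by
    have := TmEq.beta_r (x := x) (t := t) b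
      (Tm.seq (.pop b (.var x)) (.pop a s)) .skip hxt
    rwa [show Tm.subst (Subst.single x t)
        (Tm.seq (Tm.seq (.pop b (.var x)) (.pop a s)) .skip)
        = Tm.seq (Tm.seq (.pop b t) (.pop a s)) .skip from by
      simp [Tm.subst, Val.subst, Subst.single_same,
        Val.subst_single_of_notMem s hxs]] at this
  -- rearrange inside the ν using perm
  have hperm : TmEq (Tm.seq E P) (Tm.seq P E) :=
    TmEq.perm (a := b) (b := a) (.var x) s hab.symm
  have hswap : TmEq (Tm.seq P (.seq E (.seq Q .skip)))
      (Tm.seq E (.seq P (.seq Q .skip))) :=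
    ((TmEq.seq_assoc P E _).symm.trans
      (TmEq.seq_congr hperm.symm (TmEq.refl _))).trans
      (TmEq.seq_assoc E P _)
  have h2 : TmEq (Tm.seq (.seq D P) (.seq E (.seq Q .skip)))
      (Tm.seq (.seq D E) (.seq P (.seq Q .skip))) :=
    ((TmEq.seq_assoc D P _).trans
      (TmEq.seq_congr (TmEq.refl D) hswap)).trans
      (TmEq.seq_assoc D E _).symm
  -- extrude the ν
  have hxZ : x ∉ Tm.fv (Tm.seq P (.seq Q .skip)) := by
    simp [hP, hQ, Tm.fv]
    exact ⟨hxs, hxt⟩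
  have h4 : TmEq (Tm.nu x (.seq (.seq D E) (.seq P (.seq Q .skip))))
      (Tm.seq K (.seq P (.seq Q .skip))) :=
    (TmEq.nu_seq_r hxZ).symm
  have hQP : TmEq (Tm.seq Q P) (Tm.seq K (.seq P (.seq Q .skip))) :=
    (TmEq.seq_skip_r (Tm.seq Q P)).symm.trans
      (h1.symm.trans ((TmEq.nu_congr x h2).trans h4))
  -- η-step
  have hKle : Le K Tm.skip := TmEq.eta x b
  have hle : Le (Tm.seq K (.seq P (.seq Q .skip)))
      (Tm.seq .skip (.seq P (.seq Q .skip))) :=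
    hKle.seq_r _
  refine hle.congr hQP.symm ?_
  exact (TmEq.seq_skip_l _).trans
    (TmEq.seq_congr (TmEq.refl P) (TmEq.seq_skip_r Q))

/-- In the equational theory of the RMC, for distinct
locations `a ≠ b` the permutation equations `[s]a;[t]b = [t]b;[s]a` and
`a<s>;b<t> = b<t>;a<s>` are derivable. -/
theorem permutation_derivable (F : Type) (ar : F → ℕ)
    (a b : ℕ) (hab : a ≠ b) (s t : Val F ar) :
    TmEq (.seq (.push s a) (.push t b)) (.seq (.push t b) (.push s a)) ∧
    TmEq (Tm.seq (.pop a s) (.pop b t)) (.seq (.pop b t) (.pop a s)) := by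
  exact ⟨(push_le hab s t).antisymm (push_le hab.symm t s),
    (pop_le hab.symm t s).antisymm (pop_le hab s t)⟩


end RMC
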